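/- Let X ⊆ ℤ² and let V₁, …, V_n ⊆ X be thick convex digital disks with bounding curves C₁, …, C_n, and let X′ = ⋃_{i=1}^n V_i. For each i let B_{1,i} be the union of the maximal horizontal and maximal vertical segments of C_i, and let B_{2,i} be the set of endpoints of the maximal slanted segments of C_i. Then B = (X \ X′) ∪ ⋃_{i=1}^n (B_{1,i} ∪ B_{2,i}) is a freezing set for (X, c₂). -/

import Mathlib

/-- Two points of `ℤ²` are `c_u`-adjacent: they are distinct, differ by at most 1 in each
coordinate, and differ in at most `u` coordinates. -/
def adj2 (u : ℕ) (x y : ℤ × ℤ) : Prop :=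
  x ≠ y ∧ |x.1 - y.1| ≤ 1 ∧ |x.2 - y.2| ≤ 1 ∧
    ((if x.1 = y.1 then 0 else 1) + (if x.2 = y.2 then 0 else 1) : ℕ) ≤ u

/-- `f` is `c_u`-continuous on `X ⊆ ℤ²`. -/
def DigContinuous2 (u : ℕ) (X : Set (ℤ × ℤ)) (f : ℤ × ℤ → ℤ × ℤ) : Prop :=
  ∀ x ∈ X, ∀ y ∈ X, adj2 u x y → f x = f y ∨ adj2 u (f x) (f y)

/-- `A` is a freezing set for `(X, c_u)`: every `c_u`-continuous self-map of `X`
fixing `A` pointwise is the identity on `X`. -/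
def FreezingSet2 (u : ℕ) (X A : Set (ℤ × ℤ)) : Prop :=
  A ⊆ X ∧ ∀ f : ℤ × ℤ → ℤ × ℤ, Set.MapsTo f X X → DigContinuous2 u X f →
    (∀ a ∈ A, f a = a) → ∀ x ∈ X, f x = x

/-- `A` is a minimal freezing set for `(X, c_u)`. -/
def MinFreezingSet2 (u : ℕ) (X A : Set (ℤ × ℤ)) : Prop :=
  FreezingSet2 u X A ∧ ∀ A' ⊂ A, ¬ FreezingSet2 u X A'

/-- `q` is a close `c_u`-neighbor of `p` in `X`. -/
def CloseNbr2 (u : ℕ) (X : Set (ℤ × ℤ)) (p q : ℤ × ℤ) : Prop :=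
  p ∈ X ∧ q ∈ X ∧ p ≠ q ∧ ∀ x ∈ X, adj2 u x p → x = q ∨ adj2 u x q

/-- A `c_u`-path of length `k` in `Y` from `a` to `b`. -/
def IsPathIn2 (u : ℕ) (Y : Set (ℤ × ℤ)) (k : ℕ) (s : Fin (k + 1) → ℤ × ℤ)
    (a b : ℤ × ℤ) : Prop :=
  (∀ i, s i ∈ Y) ∧ s 0 = a ∧ s (Fin.last k) = b ∧
    ∀ i : Fin k, s i.castSucc = s i.succ ∨ adj2 u (s i.castSucc) (s i.succ)

/-- `Y` is `c_u`-connected. -/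
def ConnectedIn2 (u : ℕ) (Y : Set (ℤ × ℤ)) : Prop :=
  ∀ a ∈ Y, ∀ b ∈ Y, ∃ k s, IsPathIn2 u Y k s a b

/-- `C` is a `c_u`-connected component of `Y`: a maximal `c_u`-connected subset. -/
def IsComponent2 (u : ℕ) (Y C : Set (ℤ × ℤ)) : Prop :=
  C ⊆ Y ∧ C.Nonempty ∧ ConnectedIn2 u C ∧
    ∀ C', C ⊆ C' → C' ⊆ Y → ConnectedIn2 u C' → C' = C

/-- `S` is a digital `c₂`-closed curve: the trace of an injective cyclic `c₂`-path. -/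
def IsClosedCurve2 (S : Set (ℤ × ℤ)) : Prop :=
  ∃ m : ℕ, 0 < m ∧ ∃ s : ZMod m → ℤ × ℤ, Function.Injective s ∧ Set.range s = S ∧
    ∀ i, s i = s (i + 1) ∨ adj2 2 (s i) (s (i + 1))

/-- `S` is a bounding curve of the digital disk `D`: `S` is a `c₂`-closed curve,
`ℤ² \ S` has exactly two `c₁`-components, one finite (the interior `I`) and one
infinite, and `D = S ∪ I`. -/
def IsBoundingCurve (S D : Set (ℤ × ℤ)) : Prop :=
  IsClosedCurve2 S ∧ ∃ I E : Set (ℤ × ℤ), I ≠ E ∧ I.Finite ∧ E.Infinite ∧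
    {C | IsComponent2 1 Sᶜ C} = {I, E} ∧ D = S ∪ I

/-- A digital line segment: a `c₂`-connected set of two or more collinear points. -/
def IsSegment2 (T : Set (ℤ × ℤ)) : Prop :=
  ConnectedIn2 2 T ∧ (∃ p ∈ T, ∃ q ∈ T, p ≠ q) ∧
    ∃ a b c : ℤ, ¬(a = 0 ∧ b = 0) ∧ ∀ p ∈ T, a * p.1 + b * p.2 = c

/-- A horizontal digital line segment. -/
def HorizSeg (T : Set (ℤ × ℤ)) : Prop := IsSegment2 T ∧ ∀ p ∈ T, ∀ q ∈ T, p.2 = q.2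

/-- A vertical digital line segment. -/
def VertSeg (T : Set (ℤ × ℤ)) : Prop := IsSegment2 T ∧ ∀ p ∈ T, ∀ q ∈ T, p.1 = q.1

/-- A slanted digital line segment (slope `1` or `-1`). -/
def SlantSeg (T : Set (ℤ × ℤ)) : Prop := IsSegment2 T ∧
  ((∀ p ∈ T, ∀ q ∈ T, p.1 - q.1 = p.2 - q.2) ∨ (∀ p ∈ T, ∀ q ∈ T, p.1 - q.1 = -(p.2 - q.2)))

/-- `T` is a maximal horizontal segment of the curve `S`. -/
def MaxHorizSegOf (S T : Set (ℤ × ℤ)) : Prop :=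
  T ⊆ S ∧ HorizSeg T ∧ ∀ T', T ⊆ T' → T' ⊆ S → HorizSeg T' → T' = T

/-- `T` is a maximal vertical segment of the curve `S`. -/
def MaxVertSegOf (S T : Set (ℤ × ℤ)) : Prop :=
  T ⊆ S ∧ VertSeg T ∧ ∀ T', T ⊆ T' → T' ⊆ S → VertSeg T' → T' = T

/-- `T` is a maximal slanted segment of the curve `S`. -/
def MaxSlantSegOf (S T : Set (ℤ × ℤ)) : Prop :=
  T ⊆ S ∧ SlantSeg T ∧ ∀ T', T ⊆ T' → T' ⊆ S → SlantSeg T' → T' = T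

/-- `p` is an endpoint of the segment `T`: it has at most one `c₂`-neighbor in `T`. -/
def IsEndpointOf (T : Set (ℤ × ℤ)) (p : ℤ × ℤ) : Prop :=
  p ∈ T ∧ {q ∈ T | adj2 2 p q}.Subsingleton

/-- The canonical embedding `ℤ² → ℝ²`. -/
def toR2 (p : ℤ × ℤ) : ℝ × ℝ := ((p.1 : ℝ), (p.2 : ℝ))

/-- `D` is digitally convex: `D = H ∩ ℤ²`, where `H` is the convex hull of `D` in `ℝ²`. -/
def DigitallyConvex (D : Set (ℤ × ℤ)) : Prop :=
  ∀ p : ℤ × ℤ, toR2 p ∈ convexHull ℝ (toR2 '' D) → p ∈ D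

/-- A unit horizontal or vertical direction. -/
def isAxisDir (d : ℤ × ℤ) : Prop := (|d.1| = 1 ∧ d.2 = 0) ∨ (d.1 = 0 ∧ |d.2| = 1)

/-- A unit diagonal direction. -/
def isDiagDir (d : ℤ × ℤ) : Prop := |d.1| = 1 ∧ |d.2| = 1

def dot2 (d e : ℤ × ℤ) : ℤ := d.1 * e.1 + d.2 * e.2

/-- `e` is a king-move direction lying strictly inside the angle (of measure less than
180°) with side directions `d₁` and `d₂`. -/
def InSector (d₁ d₂ e : ℤ × ℤ) : Prop :=
  (isAxisDir e ∨ isDiagDir e) ∧ 0 ≤ dot2 e d₁ ∧ 0 ≤ dot2 e d₂ ∧ e ≠ d₁ ∧ e ≠ d₂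

/-- `c` lies strictly on the same side of the line through `T` as some point of `I`. -/
def InteriorSideOf (T I : Set (ℤ × ℤ)) (c : ℤ × ℤ) : Prop :=
  ∃ a b k : ℤ, (∀ q ∈ T, a * q.1 + b * q.2 = k) ∧ k < a * c.1 + b * c.2 ∧
    ∃ w ∈ I, k < a * w.1 + b * w.2

/-- `X` is thick with respect to its bounding curve `S` (whose interior is `X \ S`):
(i) every non-endpoint `p` of a maximal slanted segment of `S` has a point `c ∈ X`,
`c₂`- but not `c₁`-adjacent to `p`, on the interior side of the segment;
(ii) every vertex of a 90° interior angle of `S` with horizontal and vertical sides has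
a point of the interior `c₂`- but not `c₁`-adjacent to it, and every vertex of a 90°
interior angle with slanted sides has a point of the interior `c₁`-adjacent to it;
(iii) every vertex `p` of a 135° interior angle of `S` has points `b, b' ∈ X` inside the
angle with `b` `c₂`- but not `c₁`-adjacent to `p` and `b'` `c₁`-adjacent to `p`.
A vertex with side directions `d₁, d₂` has an interior angle (of measure < 180°)
when some king direction strictly inside the angle leads into `X`. -/
def ThickWRT (X S : Set (ℤ × ℤ)) : Prop :=
  (∀ T, MaxSlantSegOf S T → ∀ p ∈ T, ¬IsEndpointOf T p →
      ∃ c ∈ X, adj2 2 c p ∧ ¬adj2 1 c p ∧ InteriorSideOf T (X \ S) c) ∧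
  ∃ m : ℕ, 0 < m ∧ ∃ s : ZMod m → ℤ × ℤ, Function.Injective s ∧ Set.range s = S ∧
    (∀ i, s i = s (i + 1) ∨ adj2 2 (s i) (s (i + 1))) ∧
    ∀ i : ZMod m,
      (isAxisDir (s (i - 1) - s i) ∧ isAxisDir (s (i + 1) - s i) ∧
          dot2 (s (i - 1) - s i) (s (i + 1) - s i) = 0 ∧
          (∃ e, InSector (s (i - 1) - s i) (s (i + 1) - s i) e ∧ s i + e ∈ X) →
        ∃ q ∈ X \ S, adj2 2 q (s i) ∧ ¬adj2 1 q (s i)) ∧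
      (isDiagDir (s (i - 1) - s i) ∧ isDiagDir (s (i + 1) - s i) ∧
          dot2 (s (i - 1) - s i) (s (i + 1) - s i) = 0 ∧
          (∃ e, InSector (s (i - 1) - s i) (s (i + 1) - s i) e ∧ s i + e ∈ X) →
        ∃ q ∈ X \ S, adj2 1 q (s i)) ∧
      (((isAxisDir (s (i - 1) - s i) ∧ isDiagDir (s (i + 1) - s i)) ∨
          (isDiagDir (s (i - 1) - s i) ∧ isAxisDir (s (i + 1) - s i))) ∧
          dot2 (s (i - 1) - s i) (s (i + 1) - s i) = -1 ∧
          (∃ e, InSector (s (i - 1) - s i) (s (i + 1) - s i) e ∧ s i + e ∈ X) →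
        ∃ b b' : ℤ × ℤ, InSector (s (i - 1) - s i) (s (i + 1) - s i) b ∧
          InSector (s (i - 1) - s i) (s (i + 1) - s i) b' ∧
          s i + b ∈ X ∧ s i + b' ∈ X ∧
          adj2 2 (s i + b) (s i) ∧ ¬adj2 1 (s i + b) (s i) ∧ adj2 1 (s i + b') (s i))

section Helpers

lemma adj2_symm {u : ℕ} {x y : ℤ × ℤ} (h : adj2 u x y) : adj2 u y x := by
  obtain ⟨h0, h1, h2, h3⟩ := h
  refine ⟨h0.symm, by rw [abs_sub_comm]; exact h1, by rw [abs_sub_comm]; exact h2, ?_⟩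
  have e1 : (if y.1 = x.1 then 0 else 1 : ℕ) = if x.1 = y.1 then 0 else 1 := by
    by_cases a1 : x.1 = y.1
    · simp [a1]
    · rw [if_neg a1, if_neg (fun h => a1 h.symm)]
  have e2 : (if y.2 = x.2 then 0 else 1 : ℕ) = if x.2 = y.2 then 0 else 1 := by
    by_cases a2 : x.2 = y.2
    · simp [a2]
    · rw [if_neg a2, if_neg (fun h => a2 h.symm)]
  rw [e1, e2]; exact h3

lemma adj2_two {x y : ℤ × ℤ} (hne : x ≠ y) (h1 : |x.1 - y.1| ≤ 1) (h2 : |x.2 - y.2| ≤ 1) :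
    adj2 2 x y := by
  refine ⟨hne, h1, h2, ?_⟩
  split <;> split <;> omega

lemma adj2_one_h {x y : ℤ × ℤ} (hne : x ≠ y) (h1 : |x.1 - y.1| ≤ 1) (h2 : x.2 = y.2) :
    adj2 1 x y := by
  refine ⟨hne, h1, by rw [h2]; simp, ?_⟩
  rw [if_pos h2]; split <;> omega

lemma adj2_one_v {x y : ℤ × ℤ} (hne : x ≠ y) (h1 : x.1 = y.1) (h2 : |x.2 - y.2| ≤ 1) :
    adj2 1 x y := by
  refine ⟨hne, by rw [h1]; simp, h2, ?_⟩
  rw [if_pos h1]; split <;> omega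

/-- A `ℕ`-indexed chain in `Y`. -/
def NChain (u : ℕ) (Y : Set (ℤ × ℤ)) (k : ℕ) (g : ℕ → ℤ × ℤ) (a b : ℤ × ℤ) : Prop :=
  (∀ j ≤ k, g j ∈ Y) ∧ g 0 = a ∧ g k = b ∧
    ∀ j < k, g j = g (j + 1) ∨ adj2 u (g j) (g (j + 1))

lemma NChain.mono {u k g a b} {Y Y' : Set (ℤ × ℤ)} (hYY : Y ⊆ Y')
    (h : NChain u Y k g a b) : NChain u Y' k g a b :=
  ⟨fun j hj => hYY (h.1 j hj), h.2.1, h.2.2.1, h.2.2.2⟩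

lemma NChain.append {u k1 k2 g1 g2 a b c} {Y : Set (ℤ × ℤ)}
    (h1 : NChain u Y k1 g1 a b) (h2 : NChain u Y k2 g2 b c) :
    NChain u Y (k1 + k2) (fun j => if j ≤ k1 then g1 j else g2 (j - k1)) a c := by
  obtain ⟨m1, s1, e1, st1⟩ := h1
  obtain ⟨m2, s2, e2, st2⟩ := h2
  refine ⟨?_, by simp [s1], ?_, ?_⟩
  · intro j hj
    by_cases h : j ≤ k1
    · simpa [h] using m1 j h
    · simp only [h, if_false]; exact m2 (j - k1) (by omega)
  · by_cases h : k1 + k2 ≤ k1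
    · have hk2 : k2 = 0 := by omega
      simp only [if_pos h]
      rw [show k1 + k2 = k1 by omega, e1, ← s2]
      rw [hk2] at e2; exact e2.symm ▸ rfl
    · simp only [h, if_false]
      rw [show k1 + k2 - k1 = k2 by omega]; exact e2
  · intro j hj
    by_cases h : j + 1 ≤ k1
    · simp only [show j ≤ k1 by omega, h, if_true]
      exact st1 j (by omega)
    · by_cases h' : j ≤ k1
      · have hjk : j = k1 := by omega
        simp only [h', h, if_true, if_false]
        rw [hjk, e1, show k1 + 1 - k1 = 1 by omega, ← s2]
        exact st2 0 (by omega)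
      · simp only [h', h, if_false]
        rw [show j + 1 - k1 = (j - k1) + 1 by omega]
        exact st2 (j - k1) (by omega)

lemma NChain.exists_append {u k1 k2 g1 g2 a b c} {Y : Set (ℤ × ℤ)}
    (h1 : NChain u Y k1 g1 a b) (h2 : NChain u Y k2 g2 b c) :
    ∃ k g, NChain u Y k g a c := ⟨_, _, h1.append h2⟩

lemma NChain.rev {u k g a b} {Y : Set (ℤ × ℤ)} (h : NChain u Y k g a b) :
    NChain u Y k (fun j => g (k - j)) b a := by
  obtain ⟨m, s, e, st⟩ := h
  refine ⟨fun j hj => m (k - j) (by omega), by simp [e], by simp [s], ?_⟩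
  intro j hj
  have := st (k - (j + 1)) (by omega)
  rw [show k - (j+1) + 1 = k - j by omega] at this
  rcases this with h' | h'
  · exact Or.inl h'.symm
  · exact Or.inr (adj2_symm h')

lemma NChain.toPath {u k g a b} {Y : Set (ℤ × ℤ)} (h : NChain u Y k g a b) :
    ∃ s : Fin (k + 1) → ℤ × ℤ, IsPathIn2 u Y k s a b := by
  obtain ⟨m, s0, e, st⟩ := h
  refine ⟨fun i => g i.val, fun i => m i.val (by omega), by simpa using s0, ?_, ?_⟩
  · simpa [Fin.val_last] using e
  · intro i
    simpa [Fin.coe_castSucc, Fin.val_succ] using st i.val i.isLt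

lemma pathToNChain {u k s a b} {Y : Set (ℤ × ℤ)} (h : IsPathIn2 u Y k s a b) :
    NChain u Y k (fun j => s ⟨min j k, by omega⟩) a b := by
  obtain ⟨m, s0, e, st⟩ := h
  refine ⟨fun j hj => m _, ?_, ?_, ?_⟩
  · show s ⟨min 0 k, by omega⟩ = a
    have h0 : (⟨min 0 k, by omega⟩ : Fin (k+1)) = 0 := by ext; simp
    rw [h0]; exact s0
  · show s ⟨min k k, by omega⟩ = b
    have h0 : (⟨min k k, by omega⟩ : Fin (k+1)) = Fin.last k := by ext; simp [Fin.val_last]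
    rw [h0]; exact e
  · intro j hj
    show s ⟨min j k, by omega⟩ = s ⟨min (j+1) k, by omega⟩ ∨
      adj2 u (s ⟨min j k, by omega⟩) (s ⟨min (j+1) k, by omega⟩)
    have h1 : (⟨min j k, by omega⟩ : Fin (k+1)) = (⟨j, by omega⟩ : Fin k).castSucc := by
      ext; simp [Fin.coe_castSucc]; omega
    have h2 : (⟨min (j+1) k, by omega⟩ : Fin (k+1)) = (⟨j, by omega⟩ : Fin k).succ := by
      ext; simp [Fin.val_succ]; omega
    rw [h1, h2]; exact st ⟨j, by omega⟩

end Helpers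
section Helpers2

lemma adj2_bounds {u : ℕ} {x y : ℤ × ℤ} (h : adj2 u x y) :
    |x.1 - y.1| ≤ 1 ∧ |x.2 - y.2| ≤ 1 := ⟨h.2.1, h.2.2.1⟩

/-- Lipschitz property of digitally continuous maps along chains. -/
lemma lip {X : Set (ℤ × ℤ)} {f : ℤ × ℤ → ℤ × ℤ} (hf : DigContinuous2 2 X f)
    {k : ℕ} {g : ℕ → ℤ × ℤ} (hmem : ∀ j ≤ k, g j ∈ X)
    (hstep : ∀ j < k, g j = g (j + 1) ∨ adj2 2 (g j) (g (j + 1))) :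
    ∀ j ≤ k, |(f (g k)).1 - (f (g j)).1| ≤ (k : ℤ) - j ∧
      |(f (g k)).2 - (f (g j)).2| ≤ (k : ℤ) - j := by
  induction k with
  | zero => intro j hj; interval_cases j; simp
  | succ k ih =>
    intro j hj
    have hlast : |(f (g (k+1))).1 - (f (g k)).1| ≤ 1 ∧
        |(f (g (k+1))).2 - (f (g k)).2| ≤ 1 := by
      rcases hstep k (by omega) with h | h
      · rw [h]; simp
      · rcases hf (g k) (hmem k (by omega)) (g (k+1)) (hmem (k+1) le_rfl) h with h' | h'
        · rw [h']; simp
        · obtain ⟨b1, b2⟩ := adj2_bounds h'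
          constructor <;> [rw [abs_sub_comm]; rw [abs_sub_comm]] <;> assumption
    by_cases hjk : j = k + 1
    · subst hjk; simp
    · have hj' : j ≤ k := by omega
      have := ih (fun j hj => hmem j (by omega)) (fun j hj => hstep j (by omega)) j hj'
      obtain ⟨i1, i2⟩ := this
      obtain ⟨l1, l2⟩ := hlast
      rw [abs_le] at i1 i2 l1 l2
      constructor <;> (rw [abs_le]; push_cast; omega)

lemma pin_abs {A c0 : ℤ} {j k : ℕ} (hj : j ≤ k) {ε : ℤ} (hε : ε = 1 ∨ ε = -1)
    (h1 : |(c0 + ε * k) - A| ≤ (k : ℤ) - j) (h2 : |A - c0| ≤ (j : ℤ)) :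
    A = c0 + ε * j := by
  rw [abs_le] at h1 h2
  rcases hε with rfl | rfl <;> [skip; skip] <;>
    (have hjk : (j : ℤ) ≤ (k : ℤ) := by exact_mod_cast hj) <;> nlinarith [h1.1, h1.2, h2.1, h2.2]

/-- Discrete intermediate value theorem for walks with steps of size at most one. -/
lemma walkIVT {k : ℕ} {g : ℕ → ℤ × ℤ} (hstep : ∀ j < k, |(g (j + 1)).1 - (g j).1| ≤ 1)
    {c : ℤ} (h0 : (g 0).1 ≤ c) (hk : c ≤ (g k).1) : ∃ j ≤ k, (g j).1 = c := by
  induction k with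
  | zero => exact ⟨0, le_rfl, le_antisymm h0 hk⟩
  | succ k ih =>
    by_cases h : c ≤ (g k).1
    · obtain ⟨j, hj, hjc⟩ := ih (fun j hj => hstep j (by omega)) h
      exact ⟨j, by omega, hjc⟩
    · refine ⟨k + 1, le_rfl, ?_⟩
      have := hstep k (by omega)
      rw [abs_le] at this; omega

/-- Finite maximal superset extraction. -/
lemma exists_max_superset {S : Set (ℤ × ℤ)} (hS : S.Finite) (Q : Set (ℤ × ℤ) → Prop)
    {T0 : Set (ℤ × ℤ)} (h0 : Q T0) (hsub : T0 ⊆ S) :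
    ∃ T, T0 ⊆ T ∧ T ⊆ S ∧ Q T ∧ ∀ T', T ⊆ T' → T' ⊆ S → Q T' → T' = T := by
  have hfin : {T | T0 ⊆ T ∧ T ⊆ S ∧ Q T}.Finite :=
    hS.finite_subsets.subset (fun T hT => hT.2.1)
  obtain ⟨T, hT, hmax⟩ := Set.Finite.exists_maximalFor id _ hfin ⟨T0, subset_rfl, hsub, h0⟩
  exact ⟨T, hT.1, hT.2.1, hT.2.2,
    fun T' hTT' hT'S hQ => subset_antisymm (hmax ⟨hT.1.trans hTT', hT'S, hQ⟩ hTT') hTT'⟩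

/-- Points `c₁`-adjacent to a point of a `c₁`-component of `Sᶜ`, and not in `S`,
belong to the component. -/
lemma comp_closed {S I : Set (ℤ × ℤ)} (hI : IsComponent2 1 Sᶜ I) {r q' : ℤ × ℤ}
    (hr : r ∈ I) (hadj : adj2 1 q' r) (hq' : q' ∉ S) : q' ∈ I := by
  classical
  have hsub : insert q' I ⊆ Sᶜ := Set.insert_subset hq' hI.1
  have key : ∀ a ∈ insert q' I, ∃ k g, NChain 1 (insert q' I) k g a r := by
    intro a ha
    rcases Set.mem_insert_iff.mp ha with rfl | haI
    · refine ⟨1, fun j => if j = 0 then a else r, ?_, by simp, by simp, ?_⟩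
      · intro j hj
        interval_cases j
        · simpa using Set.mem_insert _ _
        · simpa using Set.mem_insert_of_mem _ hr
      · intro j hj
        interval_cases j
        simpa using Or.inr hadj
    · obtain ⟨k, s, hp⟩ := hI.2.2.1 a haI r hr
      exact ⟨k, _, (pathToNChain hp).mono (Set.subset_insert _ _)⟩
  have hconn : ConnectedIn2 1 (insert q' I) := by
    intro a ha b hb
    obtain ⟨k1, g1, h1⟩ := key a ha
    obtain ⟨k2, g2, h2⟩ := key b hb
    obtain ⟨s, hs⟩ := (h1.append h2.rev).toPath
    exact ⟨_, s, hs⟩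
  have := hI.2.2.2 (insert q' I) (Set.subset_insert _ _) hsub hconn
  rw [← this]; exact Set.mem_insert _ _

end Helpers2
section Helpers3

lemma pin1 {X : Set (ℤ × ℤ)} {f : ℤ × ℤ → ℤ × ℤ} (hcont : DigContinuous2 2 X f)
    {k : ℕ} {G : ℕ → ℤ × ℤ}
    (hmem : ∀ j ≤ k, G j ∈ X) (hstep : ∀ j < k, G j = G (j + 1) ∨ adj2 2 (G j) (G (j + 1)))
    (h0 : f (G 0) = G 0) (hk : f (G k) = G k) {ε : ℤ} (hε : ε = 1 ∨ ε = -1)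
    (hlin : ∀ j ≤ k, (G j).1 = (G 0).1 + ε * j) :
    ∀ j ≤ k, (f (G j)).1 = (G j).1 := by
  intro j hj
  have h1 := (lip hcont hmem hstep j hj).1
  have h2 := (lip hcont (fun j' hj' => hmem j' (hj'.trans hj))
    (fun j' hj' => hstep j' (lt_of_lt_of_le hj' hj)) 0 (Nat.zero_le _)).1
  rw [hk] at h1; rw [h0] at h2
  rw [hlin k le_rfl] at h1
  rw [hlin j hj]
  exact pin_abs hj hε h1 (by simpa using h2)

lemma pin2 {X : Set (ℤ × ℤ)} {f : ℤ × ℤ → ℤ × ℤ} (hcont : DigContinuous2 2 X f)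
    {k : ℕ} {G : ℕ → ℤ × ℤ}
    (hmem : ∀ j ≤ k, G j ∈ X) (hstep : ∀ j < k, G j = G (j + 1) ∨ adj2 2 (G j) (G (j + 1)))
    (h0 : f (G 0) = G 0) (hk : f (G k) = G k) {ε : ℤ} (hε : ε = 1 ∨ ε = -1)
    (hlin : ∀ j ≤ k, (G j).2 = (G 0).2 + ε * j) :
    ∀ j ≤ k, (f (G j)).2 = (G j).2 := by
  intro j hj
  have h1 := (lip hcont hmem hstep j hj).2
  have h2 := (lip hcont (fun j' hj' => hmem j' (hj'.trans hj))
    (fun j' hj' => hstep j' (lt_of_lt_of_le hj' hj)) 0 (Nat.zero_le _)).2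
  rw [hk] at h1; rw [h0] at h2
  rw [hlin k le_rfl] at h1
  rw [hlin j hj]
  exact pin_abs hj hε h1 (by simpa using h2)

lemma const_chain {u : ℕ} {Y : Set (ℤ × ℤ)} {a : ℤ × ℤ} (ha : a ∈ Y) :
    NChain u Y 0 (fun _ => a) a a := ⟨fun _ _ => ha, rfl, rfl, fun j hj => by omega⟩

lemma step_chain {u : ℕ} {Y : Set (ℤ × ℤ)} {a b : ℤ × ℤ} (ha : a ∈ Y) (hb : b ∈ Y)
    (h : a = b ∨ adj2 u a b) :
    NChain u Y 1 (fun j => if j = 0 then a else b) a b := by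
  refine ⟨?_, by simp, by simp, ?_⟩
  · intro j hj; interval_cases j <;> simpa
  · intro j hj; interval_cases j; simpa using h

lemma pair_connected {u : ℕ} {p q : ℤ × ℤ} (h : adj2 u p q) :
    ConnectedIn2 u {p, q} := by
  have hp : p ∈ ({p, q} : Set (ℤ × ℤ)) := Set.mem_insert _ _
  have hq : q ∈ ({p, q} : Set (ℤ × ℤ)) := Set.mem_insert_of_mem _ rfl
  intro a ha b hb
  rcases Set.mem_insert_iff.mp ha with rfl | ha' <;>
    [skip; rw [Set.mem_singleton_iff.mp ha']] <;>
  (rcases Set.mem_insert_iff.mp hb with rfl | hb' <;> [skip; rw [Set.mem_singleton_iff.mp hb']])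
  · exact ⟨0, (const_chain hp).toPath⟩
  · exact ⟨1, (step_chain hp hq (Or.inr h)).toPath⟩
  · exact ⟨1, (step_chain hq hp (Or.inr (adj2_symm h))).toPath⟩
  · exact ⟨0, (const_chain hq).toPath⟩

lemma hull_seg_h {D : Set (ℤ × ℤ)} {u v c y : ℤ} (huD : ((u, y) : ℤ × ℤ) ∈ D)
    (hvD : ((v, y) : ℤ × ℤ) ∈ D) (h1 : u ≤ c) (h2 : c ≤ v) :
    toR2 (c, y) ∈ convexHull ℝ (toR2 '' D) := by
  rcases eq_or_lt_of_le (h1.trans h2) with heq | hlt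
  · have : c = u := by omega
    subst this; subst heq
    exact subset_convexHull ℝ _ ⟨(c, y), huD, rfl⟩
  · have hden : (0 : ℝ) < (v : ℝ) - u := by
      have : (u : ℝ) < v := by exact_mod_cast hlt
      linarith
    set a : ℝ := ((v : ℝ) - c) / ((v : ℝ) - u) with ha_def
    set b : ℝ := ((c : ℝ) - u) / ((v : ℝ) - u) with hb_def
    have hc1 : (c : ℝ) ≤ v := by exact_mod_cast h2
    have hc2 : (u : ℝ) ≤ c := by exact_mod_cast h1
    have ha : 0 ≤ a := div_nonneg (by linarith) hden.le
    have hb : 0 ≤ b := div_nonneg (by linarith) hden.le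
    have hab : a + b = 1 := by rw [ha_def, hb_def]; field_simp; ring
    have hmem := (convex_convexHull ℝ (toR2 '' D))
      (subset_convexHull ℝ _ ⟨(u, y), huD, rfl⟩)
      (subset_convexHull ℝ _ ⟨(v, y), hvD, rfl⟩) ha hb hab
    have heq2 : a • toR2 (u, y) + b • toR2 (v, y) = toR2 (c, y) := by
      simp only [toR2, Prod.smul_mk, Prod.mk_add_mk, smul_eq_mul, Prod.mk.injEq]
      constructor
      · rw [ha_def, hb_def]; field_simp; ring
      · have : a * y + b * y = (a + b) * y := by ring
        rw [this, hab, one_mul]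
    rwa [heq2] at hmem

lemma hull_seg_v {D : Set (ℤ × ℤ)} {u v c x : ℤ} (huD : ((x, u) : ℤ × ℤ) ∈ D)
    (hvD : ((x, v) : ℤ × ℤ) ∈ D) (h1 : u ≤ c) (h2 : c ≤ v) :
    toR2 (x, c) ∈ convexHull ℝ (toR2 '' D) := by
  rcases eq_or_lt_of_le (h1.trans h2) with heq | hlt
  · have : c = u := by omega
    subst this; subst heq
    exact subset_convexHull ℝ _ ⟨(x, c), huD, rfl⟩
  · have hden : (0 : ℝ) < (v : ℝ) - u := by
      have : (u : ℝ) < v := by exact_mod_cast hlt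
      linarith
    set a : ℝ := ((v : ℝ) - c) / ((v : ℝ) - u) with ha_def
    set b : ℝ := ((c : ℝ) - u) / ((v : ℝ) - u) with hb_def
    have hc1 : (c : ℝ) ≤ v := by exact_mod_cast h2
    have hc2 : (u : ℝ) ≤ c := by exact_mod_cast h1
    have ha : 0 ≤ a := div_nonneg (by linarith) hden.le
    have hb : 0 ≤ b := div_nonneg (by linarith) hden.le
    have hab : a + b = 1 := by rw [ha_def, hb_def]; field_simp; ring
    have hmem := (convex_convexHull ℝ (toR2 '' D))
      (subset_convexHull ℝ _ ⟨(x, u), huD, rfl⟩)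
      (subset_convexHull ℝ _ ⟨(x, v), hvD, rfl⟩) ha hb hab
    have heq2 : a • toR2 (x, u) + b • toR2 (x, v) = toR2 (x, c) := by
      simp only [toR2, Prod.smul_mk, Prod.mk_add_mk, smul_eq_mul, Prod.mk.injEq]
      constructor
      · have : a * x + b * x = (a + b) * x := by ring
        rw [this, hab, one_mul]
      · rw [ha_def, hb_def]; field_simp; ring
    rwa [heq2] at hmem

end Helpers3
section Disk

lemma disk_fixed {X D S : Set (ℤ × ℤ)} {f : ℤ × ℤ → ℤ × ℤ}
    (hDX : D ⊆ X) (hbd : IsBoundingCurve S D) (hconv : DigitallyConvex D)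
    (hcont : DigContinuous2 2 X f)
    (hfixB1 : ∀ T, MaxHorizSegOf S T ∨ MaxVertSegOf S T → ∀ p ∈ T, f p = p)
    (hfixB2 : ∀ T, MaxSlantSegOf S T → ∀ p, IsEndpointOf T p → f p = p) :
    ∀ p ∈ D, f p = p := by
  obtain ⟨⟨m, hm, s, hinj, hrange, hadj⟩, I, E, hIE, hIfin, hEinf, hcompset, hDeq⟩ := hbd
  haveI : NeZero m := ⟨by omega⟩
  have hI : IsComponent2 1 Sᶜ I :=
    (by rw [hcompset]; exact Set.mem_insert _ _ : I ∈ {C | IsComponent2 1 Sᶜ C})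
  have hE : IsComponent2 1 Sᶜ E :=
    (by rw [hcompset]; exact Set.mem_insert_of_mem _ rfl : E ∈ {C | IsComponent2 1 Sᶜ C})
  have hSfin : S.Finite := hrange ▸ Set.finite_range s
  have hSD : S ⊆ D := by rw [hDeq]; exact Set.subset_union_left
  have hID : I ⊆ D := by rw [hDeq]; exact Set.subset_union_right
  have hDfin : D.Finite := by rw [hDeq]; exact hSfin.union hIfin
  -- `m ≥ 2`
  have hm2 : 2 ≤ m := by
    by_contra hlt
    have hm1 : m = 1 := by omega
    subst hm1
    have hSsing : ∀ r ∈ S, r = s 0 := by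
      intro r hr
      rw [← hrange] at hr
      obtain ⟨i0, rfl⟩ := hr
      rw [Subsingleton.elim i0 0]
    obtain ⟨q, hqI, hqmax⟩ := Set.exists_max_image I Prod.fst hIfin hI.2.1
    have hql : ∀ r ∈ I, r.1 ≤ q.1 := hqmax
    have hp0 : ((q.1 + 1, q.2) : ℤ × ℤ) ∈ S := by
      by_contra hn
      have hadj1 : adj2 1 ((q.1 + 1, q.2) : ℤ × ℤ) q := by
        refine adj2_one_h ?_ ?_ rfl
        · intro h; have := congrArg Prod.fst h; simp at this
        · simp
      have := hql _ (comp_closed hI hqI hadj1 hn)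
      simp at this
    have hup : ((q.1, q.2 + 1) : ℤ × ℤ) ∉ S := by
      intro h
      have h1 := hSsing _ h
      have h2 := hSsing _ hp0
      rw [← h2] at h1
      have := congrArg Prod.fst h1; simp at this
    have hupI : ((q.1, q.2 + 1) : ℤ × ℤ) ∈ I := by
      refine comp_closed hI hqI ?_ hup
      refine adj2_one_v ?_ rfl ?_
      · intro h; have := congrArg Prod.snd h; simp at this
      · simp
    have hdiag : ((q.1 + 1, q.2 + 1) : ℤ × ℤ) ∉ S := by
      intro h
      have h1 := hSsing _ h
      have h2 := hSsing _ hp0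
      rw [← h2] at h1
      have := congrArg Prod.snd h1; simp at this
    have hdiagI : ((q.1 + 1, q.2 + 1) : ℤ × ℤ) ∈ I := by
      refine comp_closed hI hupI ?_ hdiag
      refine adj2_one_h ?_ ?_ rfl
      · intro h; have := congrArg Prod.fst h; simp at this
      · simp
    have := hql _ hdiagI
    simp at this
  -- every point of `S` has a `c₂`-neighbor in `S`
  have hnbr : ∀ p ∈ S, ∃ q ∈ S, adj2 2 p q := by
    intro p hp
    rw [← hrange] at hp
    obtain ⟨i0, rfl⟩ := hp
    rcases hadj i0 with h | h
    · exfalso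
      have h10 : (1 : ZMod m) = 0 := left_eq_add.mp (hinj h)
      have := (ZMod.natCast_eq_zero_iff 1 m).mp (by exact_mod_cast h10)
      have := Nat.dvd_one.mp this
      omega
    · exact ⟨s (i0 + 1), hrange ▸ Set.mem_range_self _, h⟩
  -- Step A : `f` fixes all of `S`
  have stepA : ∀ p ∈ S, f p = p := by
    intro p hp
    obtain ⟨q, hqS, hpq⟩ := hnbr p hp
    have hne := hpq.1
    have hb1 := hpq.2.1
    have hb2 := hpq.2.2.1
    have hpqS : ({p, q} : Set (ℤ × ℤ)) ⊆ S :=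
      Set.insert_subset hp (Set.singleton_subset_iff.mpr hqS)
    have hpairmem : ∀ r ∈ ({p, q} : Set (ℤ × ℤ)), r = p ∨ r = q := by
      intro r hr
      rcases Set.mem_insert_iff.mp hr with h | h
      · exact Or.inl h
      · exact Or.inr (Set.mem_singleton_iff.mp h)
    by_cases h2 : p.2 = q.2
    · -- horizontal neighbor
      have hseg : HorizSeg {p, q} := by
        refine ⟨⟨pair_connected hpq, ⟨p, Set.mem_insert _ _, q, Set.mem_insert_of_mem _ rfl, hne⟩,
          ⟨0, 1, p.2, by norm_num, ?_⟩⟩, ?_⟩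
        · intro r hr
          rcases hpairmem r hr with rfl | rfl
          · ring
          · rw [← h2]; ring
        · intro r hr r' hr'
          rcases hpairmem r hr with rfl | rfl <;> rcases hpairmem r' hr' with rfl | rfl <;> omega
      obtain ⟨T, hT0T, hTS, hQT, hTmax⟩ := exists_max_superset hSfin HorizSeg hseg hpqS
      exact hfixB1 T (Or.inl ⟨hTS, hQT, hTmax⟩) p (hT0T (Set.mem_insert _ _))
    · by_cases h1 : p.1 = q.1
      · -- vertical neighbor
        have hseg : VertSeg {p, q} := by
          refine ⟨⟨pair_connected hpq, ⟨p, Set.mem_insert _ _, q, Set.mem_insert_of_mem _ rfl, hne⟩,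
            ⟨1, 0, p.1, by norm_num, ?_⟩⟩, ?_⟩
          · intro r hr
            rcases hpairmem r hr with rfl | rfl
            · ring
            · rw [← h1]; ring
          · intro r hr r' hr'
            rcases hpairmem r hr with rfl | rfl <;> rcases hpairmem r' hr' with rfl | rfl <;> omega
        obtain ⟨T, hT0T, hTS, hQT, hTmax⟩ := exists_max_superset hSfin VertSeg hseg hpqS
        exact hfixB1 T (Or.inr ⟨hTS, hQT, hTmax⟩) p (hT0T (Set.mem_insert _ _))
      · -- diagonal neighbor
        rw [abs_le] at hb1 hb2
        have hslant : SlantSeg {p, q} := by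
          by_cases hss : p.1 - q.1 = p.2 - q.2
          · refine ⟨⟨pair_connected hpq, ⟨p, Set.mem_insert _ _, q, Set.mem_insert_of_mem _ rfl, hne⟩,
              ⟨1, -1, p.1 - p.2, by norm_num, ?_⟩⟩, Or.inl ?_⟩
            · intro r hr
              rcases hpairmem r hr with rfl | rfl <;> [ring; omega]
            · intro r hr r' hr'
              rcases hpairmem r hr with rfl | rfl <;> rcases hpairmem r' hr' with rfl | rfl <;> omega
          · have hss' : p.1 - q.1 = -(p.2 - q.2) := by omega
            refine ⟨⟨pair_connected hpq, ⟨p, Set.mem_insert _ _, q, Set.mem_insert_of_mem _ rfl, hne⟩,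
              ⟨1, 1, p.1 + p.2, by norm_num, ?_⟩⟩, Or.inr ?_⟩
            · intro r hr
              rcases hpairmem r hr with rfl | rfl <;> [ring; omega]
            · intro r hr r' hr'
              rcases hpairmem r hr with rfl | rfl <;> rcases hpairmem r' hr' with rfl | rfl <;> omega
        obtain ⟨T, hT0T, hTS, hQT, hTmax⟩ := exists_max_superset hSfin SlantSeg hslant hpqS
        have hpT : p ∈ T := hT0T (Set.mem_insert _ _)
        have hqT : q ∈ T := hT0T (Set.mem_insert_of_mem _ rfl)
        have hMax : MaxSlantSegOf S T := ⟨hTS, hQT, hTmax⟩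
        -- unified slope treatment
        have go : ∀ η : ℤ, (η = 1 ∨ η = -1) → ∀ d : ℤ, (∀ r ∈ T, r.2 = η * r.1 + d) →
            f p = p := by
          intro η hη d hline
          have hinjx : ∀ r ∈ T, ∀ r' ∈ T, r.1 = r'.1 → r = r' := by
            intro r hr r' hr' h
            have e1 := hline r hr
            have e2 := hline r' hr'
            exact Prod.ext h (by rw [e1, e2, h])
          have hTfin : T.Finite := hSfin.subset hTS
          obtain ⟨eu, heuT, hue⟩ := Set.exists_min_image T Prod.fst hTfin ⟨p, hpT⟩
          obtain ⟨ev, hevT, hve⟩ := Set.exists_max_image T Prod.fst hTfin ⟨p, hpT⟩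
          have hup : eu.1 ≤ p.1 := hue p hpT
          have hpv : p.1 ≤ ev.1 := hve p hpT
          have hIVT : ∀ c, eu.1 ≤ c → c ≤ ev.1 → ((c, η * c + d) : ℤ × ℤ) ∈ T := by
            intro c hc1 hc2
            obtain ⟨k0, s0, hp0⟩ := hQT.1.1 eu heuT ev hevT
            obtain ⟨g0, hch⟩ : ∃ g, NChain 2 T k0 g eu ev := ⟨_, pathToNChain hp0⟩
            have hstep' : ∀ j < k0, |(g0 (j + 1)).1 - (g0 j).1| ≤ 1 := by
              intro j hj
              rcases hch.2.2.2 j hj with h | h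
              · rw [← h]; simp
              · rw [abs_sub_comm]; exact (adj2_bounds h).1
            obtain ⟨j, hj, hjc⟩ := walkIVT (c := c) hstep'
              (by rw [hch.2.1]; exact hc1) (by rw [hch.2.2.1]; exact hc2)
            have hmemT := hch.1 j hj
            have heq : g0 j = ((c, η * c + d) : ℤ × ℤ) :=
              Prod.ext hjc (by rw [hline _ hmemT, hjc])
            rw [← heq]
            exact hmemT
          set k := (ev.1 - eu.1).toNat with hk
          have hkv : (eu.1 : ℤ) + k = ev.1 := by
            rw [hk, Int.toNat_of_nonneg (by omega)]; ring
          set G : ℕ → ℤ × ℤ := fun j => ((eu.1 + j : ℤ), η * (eu.1 + j) + d) with hG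
          have hGmem : ∀ j ≤ k, G j ∈ T := by
            intro j hj
            have hjk : (j : ℤ) ≤ (k : ℤ) := by exact_mod_cast hj
            exact hIVT _ (by omega) (by omega)
          have hG0 : G 0 = eu := by
            refine hinjx _ (hGmem 0 (Nat.zero_le _)) eu heuT ?_
            show (eu.1 + ((0 : ℕ) : ℤ)) = eu.1
            simp
          have hGk : G k = ev := by
            refine hinjx _ (hGmem k le_rfl) ev hevT ?_
            show (eu.1 + (k : ℤ)) = ev.1
            omega
          have hGX : ∀ j ≤ k, G j ∈ X := fun j hj => hDX (hSD (hTS (hGmem j hj)))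
          have hGstep : ∀ j < k, G j = G (j + 1) ∨ adj2 2 (G j) (G (j + 1)) := by
            intro j hj
            refine Or.inr (adj2_two ?_ ?_ ?_)
            · intro h
              have := congrArg Prod.fst h
              simp only [hG] at this
              push_cast at this
              omega
            · show |(eu.1 + (j : ℤ)) - (eu.1 + ((j + 1 : ℕ) : ℤ))| ≤ 1
              push_cast
              rw [show (eu.1 + (j:ℤ)) - (eu.1 + ((j:ℤ) + 1)) = -1 by ring]
              norm_num
            · show |(η * (eu.1 + (j : ℤ)) + d) - (η * (eu.1 + ((j + 1 : ℕ) : ℤ)) + d)| ≤ 1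
              push_cast
              rw [show (η * (eu.1 + (j:ℤ)) + d) - (η * (eu.1 + ((j:ℤ) + 1)) + d) = -η by ring]
              rcases hη with rfl | rfl <;> norm_num
          -- endpoints of `T` are fixed
          have hend : ∀ e, e ∈ T → (∀ r ∈ T, e.1 ≤ r.1) ∨ (∀ r ∈ T, r.1 ≤ e.1) →
              IsEndpointOf T e := by
            intro e heT hext
            refine ⟨heT, ?_⟩
            intro r1 hr1 r2 hr2
            obtain ⟨hr1T, hr1a⟩ := hr1
            obtain ⟨hr2T, hr2a⟩ := hr2
            have key : ∀ r, r ∈ T → adj2 2 e r →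
                (∀ r' ∈ T, e.1 ≤ r'.1) ∨ (∀ r' ∈ T, r'.1 ≤ e.1) → r.1 = e.1 + 1 ∨ r.1 = e.1 - 1 := by
              intro r hrT hra hx
              have hb := (adj2_bounds hra).1
              rw [abs_le] at hb
              have hner : r.1 ≠ e.1 := by
                intro h
                exact hra.1 (hinjx e heT r hrT h.symm)
              omega
            rcases hext with hx | hx
            · have e1 : r1.1 = e.1 + 1 := by
                rcases key r1 hr1T hr1a (Or.inl hx) with h | h
                · exact h
                · have := hx r1 hr1T; omega
              have e2 : r2.1 = e.1 + 1 := by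
                rcases key r2 hr2T hr2a (Or.inl hx) with h | h
                · exact h
                · have := hx r2 hr2T; omega
              exact hinjx r1 hr1T r2 hr2T (by omega)
            · have e1 : r1.1 = e.1 - 1 := by
                rcases key r1 hr1T hr1a (Or.inr hx) with h | h
                · have := hx r1 hr1T; omega
                · exact h
              have e2 : r2.1 = e.1 - 1 := by
                rcases key r2 hr2T hr2a (Or.inr hx) with h | h
                · have := hx r2 hr2T; omega
                · exact h
              exact hinjx r1 hr1T r2 hr2T (by omega)
          have hfeu : f eu = eu := hfixB2 T hMax eu (hend eu heuT (Or.inl hue))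
          have hfev : f ev = ev := hfixB2 T hMax ev (hend ev hevT (Or.inr hve))
          set jp := (p.1 - eu.1).toNat with hjp
          have hjpk : jp ≤ k := by
            rw [hjp, hk]
            exact Int.toNat_le_toNat (by omega)
          have hpG : G jp = p := by
            refine hinjx _ (hGmem jp hjpk) p hpT ?_
            show (eu.1 + (jp : ℤ)) = p.1
            rw [hjp, Int.toNat_of_nonneg (by omega)]
            ring
          have hpin1 := pin1 hcont hGX hGstep (by rw [hG0]; exact hfeu) (by rw [hGk]; exact hfev)
            (Or.inl rfl) (by
              intro j hj
              show (eu.1 + (j : ℤ)) = (eu.1 + ((0 : ℕ) : ℤ)) + 1 * j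
              push_cast; ring) jp hjpk
          have hpin2 := pin2 hcont hGX hGstep (by rw [hG0]; exact hfeu) (by rw [hGk]; exact hfev)
            hη (by
              intro j hj
              show (η * (eu.1 + (j : ℤ)) + d) = (η * (eu.1 + ((0 : ℕ) : ℤ)) + d) + η * j
              push_cast; ring) jp hjpk
          rw [hpG] at hpin1 hpin2
          exact Prod.ext hpin1 hpin2
        rcases hQT.2 with hs | hs
        · exact go 1 (Or.inl rfl) (p.2 - p.1) (by
            intro r hr
            have := hs r hr p hpT
            omega)
        · exact go (-1) (Or.inr rfl) (p.2 + p.1) (by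
            intro r hr
            have := hs r hr p hpT
            omega)
  -- Step B : `f` fixes all of `D`
  intro p hp
  have hDSI : ∀ r, r ∈ D → r ∈ S ∨ r ∈ I := by
    intro r hr
    rw [hDeq] at hr
    exact hr
  -- horizontal chord
  have hcoord1 : (f p).1 = p.1 := by
    have hRfin : {t : ℤ | ((t, p.2) : ℤ × ℤ) ∈ D}.Finite := by
      refine Set.Finite.preimage ?_ hDfin
      intro a _ b _ h
      simpa using congrArg Prod.fst h
    obtain ⟨uu, huuR, huu⟩ := Set.exists_min_image _ id hRfin ⟨p.1, hp⟩
    obtain ⟨vv, hvvR, hvv⟩ := Set.exists_max_image _ id hRfin ⟨p.1, hp⟩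
    simp only [Set.mem_setOf_eq, id] at huuR hvvR huu hvv
    have hupv : uu ≤ p.1 := huu p.1 hp
    have hpvv : p.1 ≤ vv := hvv p.1 hp
    have hcontig : ∀ c, uu ≤ c → c ≤ vv → ((c, p.2) : ℤ × ℤ) ∈ D :=
      fun c h1 h2 => hconv _ (hull_seg_h huuR hvvR h1 h2)
    have hendS : ∀ w : ℤ, ((w, p.2) : ℤ × ℤ) ∈ D → (((w - 1, p.2) : ℤ × ℤ) ∉ D) →
        ((w, p.2) : ℤ × ℤ) ∈ S := by
      intro w hwD hwl
      rcases hDSI _ hwD with h | h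
      · exact h
      · exfalso
        have hlS : ((w - 1, p.2) : ℤ × ℤ) ∉ S := fun hh => hwl (hSD hh)
        have : ((w - 1, p.2) : ℤ × ℤ) ∈ I := by
          refine comp_closed hI h ?_ hlS
          refine adj2_one_h ?_ ?_ rfl
          · intro hh; have := congrArg Prod.fst hh; simp at this
          · simp
        exact hwl (hID this)
    have hendS' : ∀ w : ℤ, ((w, p.2) : ℤ × ℤ) ∈ D → (((w + 1, p.2) : ℤ × ℤ) ∉ D) →
        ((w, p.2) : ℤ × ℤ) ∈ S := by
      intro w hwD hwl
      rcases hDSI _ hwD with h | h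
      · exact h
      · exfalso
        have hlS : ((w + 1, p.2) : ℤ × ℤ) ∉ S := fun hh => hwl (hSD hh)
        have : ((w + 1, p.2) : ℤ × ℤ) ∈ I := by
          refine comp_closed hI h ?_ hlS
          refine adj2_one_h ?_ ?_ rfl
          · intro hh; have := congrArg Prod.fst hh; simp at this
          · simp
        exact hwl (hID this)
    have hUS : ((uu, p.2) : ℤ × ℤ) ∈ S :=
      hendS uu huuR (fun h => by have := huu _ h; omega)
    have hVS : ((vv, p.2) : ℤ × ℤ) ∈ S :=
      hendS' vv hvvR (fun h => by have := hvv _ h; omega)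
    set k := (vv - uu).toNat with hk
    have hkv : (uu : ℤ) + k = vv := by
      rw [hk, Int.toNat_of_nonneg (by omega)]; ring
    set G : ℕ → ℤ × ℤ := fun j => ((uu + j : ℤ), p.2) with hG
    have hGD : ∀ j ≤ k, G j ∈ D := by
      intro j hj
      have hjk : (j : ℤ) ≤ (k : ℤ) := by exact_mod_cast hj
      exact hcontig _ (by omega) (by omega)
    have hGX : ∀ j ≤ k, G j ∈ X := fun j hj => hDX (hGD j hj)
    have hGstep : ∀ j < k, G j = G (j + 1) ∨ adj2 2 (G j) (G (j + 1)) := by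
      intro j hj
      refine Or.inr (adj2_two ?_ ?_ ?_)
      · intro h
        have := congrArg Prod.fst h
        simp only [hG] at this
        push_cast at this
        omega
      · show |(uu + (j : ℤ)) - (uu + ((j + 1 : ℕ) : ℤ))| ≤ 1
        push_cast
        rw [show (uu + (j:ℤ)) - (uu + ((j:ℤ) + 1)) = -1 by ring]
        norm_num
      · show |((p.2 : ℤ)) - p.2| ≤ 1
        simp
    have hG0 : G 0 = ((uu, p.2) : ℤ × ℤ) := by
      show ((uu + ((0 : ℕ) : ℤ), p.2) : ℤ × ℤ) = (uu, p.2)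
      simp
    have hGk : G k = ((vv, p.2) : ℤ × ℤ) := by
      show ((uu + (k : ℤ), p.2) : ℤ × ℤ) = (vv, p.2)
      rw [hkv]
    set jp := (p.1 - uu).toNat with hjp
    have hjpk : jp ≤ k := by
      rw [hjp, hk]
      exact Int.toNat_le_toNat (by omega)
    have hpG : G jp = p := by
      have : (uu + (jp : ℤ)) = p.1 := by
        rw [hjp, Int.toNat_of_nonneg (by omega)]; ring
      show ((uu + (jp : ℤ), p.2) : ℤ × ℤ) = p
      rw [this]
    have := pin1 hcont hGX hGstep (by rw [hG0]; exact stepA _ hUS)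
      (by rw [hGk]; exact stepA _ hVS) (Or.inl rfl) (by
        intro j hj
        show (uu + (j : ℤ)) = (uu + ((0 : ℕ) : ℤ)) + 1 * j
        push_cast; ring) jp hjpk
    rw [hpG] at this
    exact this
  -- vertical chord
  have hcoord2 : (f p).2 = p.2 := by
    have hRfin : {t : ℤ | ((p.1, t) : ℤ × ℤ) ∈ D}.Finite := by
      refine Set.Finite.preimage ?_ hDfin
      intro a _ b _ h
      simpa using congrArg Prod.snd h
    obtain ⟨uu, huuR, huu⟩ := Set.exists_min_image _ id hRfin ⟨p.2, hp⟩
    obtain ⟨vv, hvvR, hvv⟩ := Set.exists_max_image _ id hRfin ⟨p.2, hp⟩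
    simp only [Set.mem_setOf_eq, id] at huuR hvvR huu hvv
    have hupv : uu ≤ p.2 := huu p.2 hp
    have hpvv : p.2 ≤ vv := hvv p.2 hp
    have hcontig : ∀ c, uu ≤ c → c ≤ vv → ((p.1, c) : ℤ × ℤ) ∈ D :=
      fun c h1 h2 => hconv _ (hull_seg_v huuR hvvR h1 h2)
    have hendS : ∀ w : ℤ, ((p.1, w) : ℤ × ℤ) ∈ D → (((p.1, w - 1) : ℤ × ℤ) ∉ D) →
        ((p.1, w) : ℤ × ℤ) ∈ S := by
      intro w hwD hwl
      rcases hDSI _ hwD with h | h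
      · exact h
      · exfalso
        have hlS : ((p.1, w - 1) : ℤ × ℤ) ∉ S := fun hh => hwl (hSD hh)
        have : ((p.1, w - 1) : ℤ × ℤ) ∈ I := by
          refine comp_closed hI h ?_ hlS
          refine adj2_one_v ?_ rfl ?_
          · intro hh; have := congrArg Prod.snd hh; simp at this
          · simp
        exact hwl (hID this)
    have hendS' : ∀ w : ℤ, ((p.1, w) : ℤ × ℤ) ∈ D → (((p.1, w + 1) : ℤ × ℤ) ∉ D) →
        ((p.1, w) : ℤ × ℤ) ∈ S := by
      intro w hwD hwl
      rcases hDSI _ hwD with h | h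
      · exact h
      · exfalso
        have hlS : ((p.1, w + 1) : ℤ × ℤ) ∉ S := fun hh => hwl (hSD hh)
        have : ((p.1, w + 1) : ℤ × ℤ) ∈ I := by
          refine comp_closed hI h ?_ hlS
          refine adj2_one_v ?_ rfl ?_
          · intro hh; have := congrArg Prod.snd hh; simp at this
          · simp
        exact hwl (hID this)
    have hUS : ((p.1, uu) : ℤ × ℤ) ∈ S :=
      hendS uu huuR (fun h => by have := huu _ h; omega)
    have hVS : ((p.1, vv) : ℤ × ℤ) ∈ S :=
      hendS' vv hvvR (fun h => by have := hvv _ h; omega)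
    set k := (vv - uu).toNat with hk
    have hkv : (uu : ℤ) + k = vv := by
      rw [hk, Int.toNat_of_nonneg (by omega)]; ring
    set G : ℕ → ℤ × ℤ := fun j => (p.1, (uu + j : ℤ)) with hG
    have hGD : ∀ j ≤ k, G j ∈ D := by
      intro j hj
      have hjk : (j : ℤ) ≤ (k : ℤ) := by exact_mod_cast hj
      exact hcontig _ (by omega) (by omega)
    have hGX : ∀ j ≤ k, G j ∈ X := fun j hj => hDX (hGD j hj)
    have hGstep : ∀ j < k, G j = G (j + 1) ∨ adj2 2 (G j) (G (j + 1)) := by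
      intro j hj
      refine Or.inr (adj2_two ?_ ?_ ?_)
      · intro h
        have := congrArg Prod.snd h
        simp only [hG] at this
        push_cast at this
        omega
      · show |((p.1 : ℤ)) - p.1| ≤ 1
        simp
      · show |(uu + (j : ℤ)) - (uu + ((j + 1 : ℕ) : ℤ))| ≤ 1
        push_cast
        rw [show (uu + (j:ℤ)) - (uu + ((j:ℤ) + 1)) = -1 by ring]
        norm_num
    have hG0 : G 0 = ((p.1, uu) : ℤ × ℤ) := by
      show ((p.1, uu + ((0 : ℕ) : ℤ)) : ℤ × ℤ) = (p.1, uu)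
      simp
    have hGk : G k = ((p.1, vv) : ℤ × ℤ) := by
      show ((p.1, uu + (k : ℤ)) : ℤ × ℤ) = (p.1, vv)
      rw [hkv]
    set jp := (p.2 - uu).toNat with hjp
    have hjpk : jp ≤ k := by
      rw [hjp, hk]
      exact Int.toNat_le_toNat (by omega)
    have hpG : G jp = p := by
      have : (uu + (jp : ℤ)) = p.2 := by
        rw [hjp, Int.toNat_of_nonneg (by omega)]; ring
      show ((p.1, uu + (jp : ℤ)) : ℤ × ℤ) = p
      rw [this]
    have := pin2 hcont hGX hGstep (by rw [hG0]; exact stepA _ hUS)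
      (by rw [hGk]; exact stepA _ hVS) (Or.inl rfl) (by
        intro j hj
        show (uu + (j : ℤ)) = (uu + ((0 : ℕ) : ℤ)) + 1 * j
        push_cast; ring) jp hjpk
    rw [hpG] at this
    exact this
  exact Prod.ext hcoord1 hcoord2

end Disk
/-- Theorem (freezing sets from unions of thick convex disks, `c₂` case):
if `V 1, …, V n ⊆ X ⊆ ℤ²` are thick convex digital disks with bounding curves
`C 1, …, C n` and `X' = ⋃ i, V i`, then `(X \ X')` together with, for each `i`, the
union of the maximal horizontal and maximal vertical segments of `C i` and the
endpoints of the maximal slanted segments of `C i`, is a freezing set for `(X, c₂)`. -/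
theorem corners_c2 (X : Set (ℤ × ℤ)) (n : ℕ) (V C : Fin n → Set (ℤ × ℤ))
    (hVX : ∀ i, V i ⊆ X)
    (hbd : ∀ i, IsBoundingCurve (C i) (V i))
    (hconv : ∀ i, DigitallyConvex (V i))
    (hthick : ∀ i, ThickWRT (V i) (C i)) :
    FreezingSet2 2 X
      ((X \ ⋃ i, V i) ∪
        ⋃ i, ({x | ∃ T, (MaxHorizSegOf (C i) T ∨ MaxVertSegOf (C i) T) ∧ x ∈ T} ∪
          {x | ∃ T, MaxSlantSegOf (C i) T ∧ IsEndpointOf T x})) := by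
  have hCV : ∀ i, C i ⊆ V i := by
    intro i
    obtain ⟨-, I, E, -, -, -, -, hDeq⟩ := hbd i
    rw [hDeq]
    exact Set.subset_union_left
  constructor
  · intro x hx
    rcases hx with hx | hx
    · exact hx.1
    · rw [Set.mem_iUnion] at hx
      obtain ⟨i, hx⟩ := hx
      rcases hx with hx | hx
      · obtain ⟨T, hT, hxT⟩ := hx
        have hTS : T ⊆ C i := by rcases hT with h | h <;> exact h.1
        exact hVX i (hCV i (hTS hxT))
      · obtain ⟨T, hT, hxend⟩ := hx
        exact hVX i (hCV i (hT.1 hxend.1))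
  · intro f hmaps hcont hfix x hx
    by_cases hx' : x ∈ ⋃ i, V i
    · rw [Set.mem_iUnion] at hx'
      obtain ⟨i, hxi⟩ := hx'
      refine disk_fixed (hVX i) (hbd i) (hconv i) hcont ?_ ?_ x hxi
      · intro T hT p hpT
        refine hfix p (Or.inr ?_)
        rw [Set.mem_iUnion]
        exact ⟨i, Or.inl ⟨T, hT, hpT⟩⟩
      · intro T hT p hpend
        refine hfix p (Or.inr ?_)
        rw [Set.mem_iUnion]
        exact ⟨i, Or.inr ⟨T, hT, hpend⟩⟩
    · exact hfix x (Or.inl ⟨hx, hx'⟩)
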